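/- arXiv:1006.5780 — 2 statements merged into one kernel-verified Lean document; each statement's English description precedes it below -/
import Mathlib

section
/- Let σ ∈ C³([0,∞)) and 0 < σ₀ ≤ σ_∞ satisfy σ₀ ≤ −σ'(r) ≤ σ_∞ for all r ≥ 0, and let φ be defined on [0,∞) by φ''(r) = −σ'(r)/r for r > 0, φ(1) = φ'(1) = 0 (with φ(0) defined by continuity). Then for all r ≥ 0: σ₀ ( r ln r − r + 1 ) ≤ φ(r) ≤ σ_∞ ( r ln r − r + 1 ), where r ln r is understood as 0 at r = 0. Consequently, σ₀ r |ln r| ≤ φ(r) + σ₀ r + σ₀/e for all r ≥ 0. -/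
open MeasureTheory Set

private lemma key_nonneg (f : ℝ → ℝ)
    (hf : ∀ r > (0:ℝ), DifferentiableAt ℝ f r ∧ DifferentiableAt ℝ (deriv f) r)
    (hf1 : f 1 = 0) (hf'1 : deriv f 1 = 0)
    (h'' : ∀ r > (0:ℝ), 0 ≤ deriv (deriv f) r) :
    ∀ r > (0:ℝ), 0 ≤ f r := by
  have hdiff' : DifferentiableOn ℝ (deriv f) (Ioi 0) :=
    fun r hr => ((hf r hr).2).differentiableWithinAt
  have hmono : MonotoneOn (deriv f) (Ioi 0) := by
    apply monotoneOn_of_deriv_nonneg (convex_Ioi 0)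
        (fun r hr => ((hf r hr).2).continuousAt.continuousWithinAt)
    · rwa [interior_Ioi]
    · rw [interior_Ioi]; exact fun r hr => h'' r hr
  intro r hr
  rcases le_or_gt 1 r with h1 | h1
  · -- f monotone on Ici 1
    have hmono2 : MonotoneOn f (Ici 1) := by
      apply monotoneOn_of_deriv_nonneg (convex_Ici 1)
          (fun x hx => ((hf x (lt_of_lt_of_le one_pos hx)).1).continuousAt.continuousWithinAt)
      · rw [interior_Ici]
        exact fun x hx => ((hf x (lt_trans one_pos hx)).1).differentiableWithinAt
      · rw [interior_Ici]
        intro x hx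
        have := hmono (mem_Ioi.2 one_pos) (mem_Ioi.2 (lt_trans one_pos hx)) hx.le
        linarith [hf'1 ▸ this]
    have := hmono2 (mem_Ici.2 le_rfl) (mem_Ici.2 h1) h1
    linarith [hf1 ▸ this]
  · -- f antitone on Icc r 1
    have hanti : AntitoneOn f (Icc r 1) := by
      apply antitoneOn_of_deriv_nonpos (convex_Icc r 1)
          (fun x hx => ((hf x (lt_of_lt_of_le hr hx.1)).1).continuousAt.continuousWithinAt)
      · rw [interior_Icc]
        exact fun x hx => ((hf x (lt_trans hr hx.1)).1).differentiableWithinAt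
      · rw [interior_Icc]
        intro x hx
        have := hmono (mem_Ioi.2 (lt_trans hr hx.1)) (mem_Ioi.2 one_pos) hx.2.le
        linarith [hf'1 ▸ this]
    have := hanti (mem_Icc.2 ⟨le_rfl, h1.le⟩) (mem_Icc.2 ⟨h1.le, le_rfl⟩) h1.le
    linarith [hf1 ▸ this]

/-- Entropy bounds for the function `φ` defined by
`φ''(r) = −σ'(r)/r` (r>0), `φ(1) = φ'(1) = 0`, under `0 < σ₀ ≤ −σ' ≤ σ_∞`:
`σ₀ (r ln r − r + 1) ≤ φ(r) ≤ σ_∞ (r ln r − r + 1)` for all `r ≥ 0`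
(with `r ln r = 0` at `r = 0`, as is the Mathlib convention `Real.log 0 = 0`),
and consequently `σ₀ r |ln r| ≤ φ(r) + σ₀ r + σ₀/e`. -/
theorem phi_entropy_bounds
    (σ₀ σinf : ℝ) (hσ₀ : 0 < σ₀) (hσord : σ₀ ≤ σinf)
    (σ : ℝ → ℝ) (hσreg : ContDiffOn ℝ 3 σ (Ici 0))
    (hσ' : ∀ r ≥ (0:ℝ), σ₀ ≤ -deriv σ r ∧ -deriv σ r ≤ σinf)
    (φ : ℝ → ℝ)
    (hφcont : ContinuousWithinAt φ (Ici 0) 0)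
    (hφdiff : ∀ r > (0:ℝ), DifferentiableAt ℝ φ r ∧ DifferentiableAt ℝ (deriv φ) r)
    (hφ'' : ∀ r > (0:ℝ), deriv (deriv φ) r = -(deriv σ r) / r)
    (hφ1 : φ 1 = 0) (hφ'1 : deriv φ 1 = 0) :
    ∀ r ≥ (0:ℝ),
      (σ₀ * (r * Real.log r - r + 1) ≤ φ r ∧
        φ r ≤ σinf * (r * Real.log r - r + 1)) ∧
      σ₀ * (r * |Real.log r|) ≤ φ r + σ₀ * r + σ₀ / Real.exp 1 := by
  -- entropy function and its derivatives
  set E : ℝ → ℝ := fun x => x * Real.log x - x + 1 with hE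
  have hEderiv : ∀ x > (0:ℝ), HasDerivAt E (Real.log x) x := by
    intro x hx
    have h1 := (Real.hasDerivAt_mul_log hx.ne')
    have h2 : HasDerivAt E (Real.log x + 1 - 1) x := by
      simpa [hE] using ((h1.sub (hasDerivAt_id x)).add_const 1)
    simpa using h2
  -- general auxiliary: for c with suitable sign condition, φ - c•E or c•E - φ is nonneg
  have main : ∀ (c : ℝ) (ε : ℝ), ε = 1 ∨ ε = -1 →
      (∀ x > (0:ℝ), 0 ≤ ε * (-(deriv σ x) - c)) →
      ∀ r > (0:ℝ), 0 ≤ ε * (φ r - c * E r) := by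
    intro c ε hε hsign
    set g : ℝ → ℝ := fun x => ε * (φ x - c * E x) with hg
    have hεd : ∀ x > (0:ℝ), HasDerivAt g (ε * (deriv φ x - c * Real.log x)) x := by
      intro x hx
      exact (((hφdiff x hx).1.hasDerivAt).sub ((hEderiv x hx).const_mul c)).const_mul ε
    have hgderiv : ∀ x > (0:ℝ), deriv g x = ε * (deriv φ x - c * Real.log x) := by
      intro x hx; exact (hεd x hx).deriv
    have hgderivEq : ∀ x > (0:ℝ),
        deriv g =ᶠ[nhds x] fun y => ε * (deriv φ y - c * Real.log y) := by
      intro x hx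
      filter_upwards [Ioi_mem_nhds hx] with y hy
      exact hgderiv y hy
    have hG : ∀ x > (0:ℝ),
        HasDerivAt (fun y => ε * (deriv φ y - c * Real.log y))
          (ε * (deriv (deriv φ) x - c * x⁻¹)) x := by
      intro x hx
      exact (((hφdiff x hx).2.hasDerivAt).sub
        ((Real.hasDerivAt_log hx.ne').const_mul c)).const_mul ε
    apply key_nonneg g
    · intro x hx
      refine ⟨(hεd x hx).differentiableAt, ?_⟩
      rw [(hgderivEq x hx).differentiableAt_iff]
      exact (hG x hx).differentiableAt
    · simp [hg, hE, hφ1]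
    · rw [hgderiv 1 one_pos]; simp [hφ'1]
    · intro x hx
      rw [(hgderivEq x hx).deriv_eq, (hG x hx).deriv, hφ'' x hx]
      have h := hsign x hx
      have hxne : x ≠ 0 := hx.ne'
      rcases hε with rfl | rfl
      · have h0 : (1:ℝ) * (-deriv σ x / x - c * x⁻¹) = (-deriv σ x - c) / x := by
          field_simp
        rw [h0]
        apply div_nonneg _ hx.le
        linarith
      · have h0 : (-1:ℝ) * (-deriv σ x / x - c * x⁻¹) = (c - (-deriv σ x)) / x := by
          field_simp; ring
        rw [h0]
        apply div_nonneg _ hx.le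
        linarith
  have hlow : ∀ r > (0:ℝ), σ₀ * E r ≤ φ r := by
    intro r hr
    have := main σ₀ 1 (Or.inl rfl) (fun x hx => by
      have := (hσ' x hx.le).1; simpa using by linarith) r hr
    linarith [this]
  have hup : ∀ r > (0:ℝ), φ r ≤ σinf * E r := by
    intro r hr
    have := main σinf (-1) (Or.inr rfl) (fun x hx => by
      have := (hσ' x hx.le).2; nlinarith) r hr
    nlinarith [this]
  -- entropy inequality x * log x ≥ -1/e (for x > 0)
  have hent : ∀ x > (0:ℝ), -(Real.exp 1)⁻¹ ≤ x * Real.log x := by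
    intro x hx
    have h1 : Real.log (x⁻¹) ≤ x⁻¹ / Real.exp 1 := by
      have := Real.log_le_sub_one_of_pos (x := x⁻¹ / Real.exp 1)
        (by positivity)
      rw [Real.log_div (by positivity) (Real.exp_ne_zero 1), Real.log_exp] at this
      linarith
    have h2 : Real.log x⁻¹ = -Real.log x := Real.log_inv x
    rw [h2] at h1
    have h3 : x * (-Real.log x) ≤ x * (x⁻¹ / Real.exp 1) :=
      mul_le_mul_of_nonneg_left h1 hx.le
    have h4 : x * (x⁻¹ / Real.exp 1) = (Real.exp 1)⁻¹ := by
      field_simp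
    nlinarith
  have he1 : (1:ℝ) ≤ Real.exp 1 := by
    linarith [Real.add_one_le_exp (1:ℝ)]
  have hepos : (0:ℝ) < Real.exp 1 := Real.exp_pos 1
  -- value at 0
  have hφ0low : σ₀ ≤ φ 0 := by
    have htφ : Filter.Tendsto φ (nhdsWithin 0 (Ioi 0)) (nhds (φ 0)) :=
      hφcont.tendsto.mono_left (nhdsWithin_mono _ (fun x hx => mem_Ici.2 (le_of_lt hx)))
    have htE : Filter.Tendsto (fun x => σ₀ * E x) (nhdsWithin 0 (Ioi 0)) (nhds σ₀) := by
      have : Continuous (fun x => σ₀ * E x) := by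
        simp only [hE]
        exact continuous_const.mul ((Real.continuous_mul_log.sub continuous_id).add
          continuous_const)
      have h0 : σ₀ * E 0 = σ₀ := by simp [hE]
      have := (this.tendsto 0).mono_left (nhdsWithin_le_nhds (s := Ioi (0:ℝ)))
      rwa [h0] at this
    exact le_of_tendsto_of_tendsto htE htφ (Filter.eventually_of_mem self_mem_nhdsWithin (fun x hx => hlow x hx))
  have hφ0up : φ 0 ≤ σinf := by
    have htφ : Filter.Tendsto φ (nhdsWithin 0 (Ioi 0)) (nhds (φ 0)) :=
      hφcont.tendsto.mono_left (nhdsWithin_mono _ (fun x hx => mem_Ici.2 (le_of_lt hx)))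
    have htE : Filter.Tendsto (fun x => σinf * E x) (nhdsWithin 0 (Ioi 0)) (nhds σinf) := by
      have : Continuous (fun x => σinf * E x) := by
        simp only [hE]
        exact continuous_const.mul ((Real.continuous_mul_log.sub continuous_id).add
          continuous_const)
      have h0 : σinf * E 0 = σinf := by simp [hE]
      have := (this.tendsto 0).mono_left (nhdsWithin_le_nhds (s := Ioi (0:ℝ)))
      rwa [h0] at this
    exact le_of_tendsto_of_tendsto htφ htE (Filter.eventually_of_mem self_mem_nhdsWithin (fun x hx => hup x hx))
  intro r hr
  rcases eq_or_lt_of_le hr with rfl | hr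
  · constructor
    · constructor
      · simpa [hE] using hφ0low
      · simpa [hE] using hφ0up
    · simp only [Real.log_zero, abs_zero, mul_zero, zero_mul, mul_zero]
      have : 0 < σ₀ / Real.exp 1 := by positivity
      linarith
  · have hl := hlow r hr
    have hu := hup r hr
    refine ⟨⟨hl, hu⟩, ?_⟩
    have hentr := hent r hr
    rcases le_or_gt 0 (Real.log r) with hlr | hlr
    · rw [abs_of_nonneg hlr]
      simp only [hE] at hl
      have : 0 < σ₀ / Real.exp 1 := by positivity
      nlinarith
    · rw [abs_of_neg hlr]
      simp only [hE] at hl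
      have hinv : (Real.exp 1)⁻¹ ≤ 1 := by
        rw [inv_le_one_iff₀]; right; exact he1
      have hdiv : σ₀ / Real.exp 1 = σ₀ * (Real.exp 1)⁻¹ := by ring
      nlinarith [mul_le_mul_of_nonneg_left hentr hσ₀.le]
end

section
/- Let L > 0 and let h ∈ C([0,L]) be nonnegative with h^{5/2} ∈ C¹([0,L]). Then for all x, y ∈ [0,L]: |h(x) − h(y)| ≤ |x − y|^{1/5} ‖∂ₓ(h^{5/2})‖_{L₂(0,L)}^{2/5}. In particular, h is Hölder continuous of exponent 1/5 with Hölder seminorm at most ‖∂ₓ(h^{5/2})‖_{L₂(0,L)}^{2/5}. -/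
open MeasureTheory Set

/-- Subadditivity of `rpow` for exponents in `[0,1]`, real version. -/
lemma real_rpow_add_le_add_rpow {p : ℝ} (a b : ℝ) (ha : 0 ≤ a) (hb : 0 ≤ b)
    (hp : 0 ≤ p) (hp1 : p ≤ 1) : (a + b) ^ p ≤ a ^ p + b ^ p := by
  have := NNReal.rpow_add_le_add_rpow ⟨a, ha⟩ ⟨b, hb⟩ hp hp1
  have h2 : ((⟨a, ha⟩ + ⟨b, hb⟩ : NNReal) ^ p : ℝ) ≤
      ((⟨a, ha⟩ : NNReal) ^ p : ℝ) + ((⟨b, hb⟩ : NNReal) ^ p : ℝ) := by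
    exact_mod_cast this
  rw [show ((⟨a, ha⟩ + ⟨b, hb⟩ : NNReal) : ℝ) = a + b from rfl] at h2
  simpa [NNReal.coe_rpow] using h2

/-- `|a^p - b^p| ≤ |a-b|^p` for `a, b ≥ 0`, `p ∈ [0,1]`. -/
lemma abs_rpow_sub_rpow_le {p : ℝ} (a b : ℝ) (ha : 0 ≤ a) (hb : 0 ≤ b)
    (hp : 0 ≤ p) (hp1 : p ≤ 1) : |a ^ p - b ^ p| ≤ |a - b| ^ p := by
  wlog hab : b ≤ a generalizing a b
  · rw [abs_sub_comm, abs_sub_comm a b]; exact this b a hb ha (le_of_not_ge hab)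
  have h1 : a ^ p ≤ (a - b) ^ p + b ^ p := by
    have := real_rpow_add_le_add_rpow (a - b) b (by linarith) hb hp hp1
    simpa using this
  have h2 : b ^ p ≤ a ^ p := Real.rpow_le_rpow hb hab hp
  rw [abs_of_nonneg (by linarith), abs_of_nonneg (by linarith)]
  linarith

/-- If `h : [0,L] → ℝ` is continuous and nonnegative and `h^{5/2}` is `C¹`,
then `|h x - h y| ≤ |x-y|^{1/5} ‖∂ₓ(h^{5/2})‖_{L₂(0,L)}^{2/5}`; in particular `h` is
`1/5`-Hölder continuous with seminorm at most `‖∂ₓ(h^{5/2})‖_{L₂}^{2/5}`.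
(Note that `(∫ (∂ₓ(h^{5/2}))²)^{1/5} = ‖∂ₓ(h^{5/2})‖₂^{2/5}`.) -/
theorem holder_bound_from_h52
    (L : ℝ) (hL : 0 < L) (h : ℝ → ℝ)
    (hcont : ContinuousOn h (Icc 0 L))
    (hnn : ∀ x ∈ Icc (0:ℝ) L, 0 ≤ h x)
    (hdiff : ∀ x ∈ Icc (0:ℝ) L, DifferentiableAt ℝ (fun y => h y ^ ((5:ℝ)/2)) x)
    (hderiv_cont : ContinuousOn (deriv (fun y => h y ^ ((5:ℝ)/2))) (Icc 0 L)) :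
    ∀ x ∈ Icc (0:ℝ) L, ∀ y ∈ Icc (0:ℝ) L,
      |h x - h y| ≤ |x - y| ^ ((1:ℝ)/5) *
        (∫ z in (0:ℝ)..L, (deriv (fun y => h y ^ ((5:ℝ)/2)) z) ^ 2) ^ ((1:ℝ)/5) := by
  set u : ℝ → ℝ := fun y => h y ^ ((5:ℝ)/2) with hu
  set g : ℝ → ℝ := deriv u with hg
  set I : ℝ := ∫ z in (0:ℝ)..L, g z ^ 2 with hI
  -- integrability of g² on Ioc 0 L and nonnegativity of I
  have hg2cont : ContinuousOn (fun z => g z ^ 2) (Icc 0 L) := hderiv_cont.pow 2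
  have hg2int : IntegrableOn (fun z => g z ^ 2) (Ioc 0 L) :=
    (hg2cont.integrableOn_Icc).mono_set Ioc_subset_Icc_self
  have hIeq : I = ∫ z in Ioc 0 L, g z ^ 2 := by
    rw [hI, intervalIntegral.integral_of_le hL.le]
  have hInn : 0 ≤ I := by
    rw [hIeq]
    exact setIntegral_nonneg measurableSet_Ioc (fun z _ => sq_nonneg _)
  -- the key estimate for ordered pairs
  have key : ∀ x ∈ Icc (0:ℝ) L, ∀ y ∈ Icc (0:ℝ) L, y ≤ x →
      |h x - h y| ≤ |x - y| ^ ((1:ℝ)/5) * I ^ ((1:ℝ)/5) := by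
    intro x hx y hy hyx
    -- FTC : u x - u y = ∫ g on [y,x]
    have hsub : uIcc y x ⊆ Icc 0 L := by
      rw [uIcc_of_le hyx]
      exact Icc_subset_Icc hy.1 hx.2
    have hftc : ∫ z in y..x, g z = u x - u y := by
      apply intervalIntegral.integral_deriv_eq_sub
      · intro z hz; exact hdiff z (hsub hz)
      · exact (hderiv_cont.mono hsub).intervalIntegrable
    -- Cauchy-Schwarz on [y,x]
    have hIyx : (∫ z in Ioc y x, g z ^ 2) ≤ I := by
      rw [hIeq]
      apply setIntegral_mono_set hg2int
      · exact Filter.Eventually.of_forall fun z => sq_nonneg _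
      · exact HasSubset.Subset.eventuallyLE
          (Ioc_subset_Ioc hy.1 hx.2)
    have hIyx_nn : 0 ≤ ∫ z in Ioc y x, g z ^ 2 :=
      setIntegral_nonneg measurableSet_Ioc (fun z _ => sq_nonneg _)
    have hsub' : Ioc y x ⊆ Icc 0 L := (Ioc_subset_Icc_self.trans (Icc_subset_Icc hy.1 hx.2))
    have hgmeas : AEStronglyMeasurable g (volume.restrict (Ioc y x)) :=
      (hderiv_cont.mono hsub').aestronglyMeasurable measurableSet_Ioc
    have habs : |u x - u y| ≤ (x - y) ^ ((1:ℝ)/2) * (∫ z in Ioc y x, g z ^ 2) ^ ((1:ℝ)/2) := by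
      rw [← hftc]
      calc |∫ z in y..x, g z| ≤ ∫ z in Ioc y x, |g z| := by
              rw [intervalIntegral.integral_of_le hyx]
              simpa [Real.norm_eq_abs] using
                norm_integral_le_integral_norm (μ := volume.restrict (Ioc y x)) g
        _ ≤ (∫ z in Ioc y x, (1:ℝ) ^ (2:ℝ)) ^ ((1:ℝ)/2) *
              (∫ z in Ioc y x, |g z| ^ (2:ℝ)) ^ ((1:ℝ)/2) := by
              have := integral_mul_le_Lp_mul_Lq_of_nonneg
                (μ := volume.restrict (Ioc y x))
                (p := 2) (q := 2) (Real.holderConjugate_iff_eq_conjExponent (by norm_num) |>.mpr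
                  (by norm_num)) (f := fun _ => (1:ℝ)) (g := fun z => |g z|)
                (Filter.Eventually.of_forall fun _ => zero_le_one)
                (Filter.Eventually.of_forall fun z => abs_nonneg _)
                ?_ ?_
              · simpa [one_div] using this
              · exact memLp_const 1
              · -- |g| is Memℒp 2 on restricted measure: bounded continuous on compact
                have hcomp : IsCompact (Icc (0:ℝ) L) := isCompact_Icc
                obtain ⟨M, hM⟩ := hcomp.exists_bound_of_continuousOn hderiv_cont
                have habsmeas : AEStronglyMeasurable (fun z => |g z|)
                    (volume.restrict (Ioc y x)) := by
                  simpa [Real.norm_eq_abs] using hgmeas.norm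
                apply MemLp.of_bound habsmeas M
                apply ae_restrict_of_forall_mem measurableSet_Ioc
                intro z hz
                simpa using hM z (hsub' hz)
        _ = (x - y) ^ ((1:ℝ)/2) * (∫ z in Ioc y x, g z ^ 2) ^ ((1:ℝ)/2) := by
              congr 1
              · congr 1
                simp [Real.one_rpow, Real.volume_Ioc,
                  ENNReal.toReal_ofReal (sub_nonneg.mpr hyx), hyx]
              · congr 1
                apply setIntegral_congr_fun measurableSet_Ioc
                intro z _
                show |g z| ^ (2:ℝ) = g z ^ 2
                rw [show (2:ℝ) = ((2:ℕ):ℝ) by norm_num, Real.rpow_natCast, sq_abs]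
    -- convert: h = u^{2/5}
    have hxh : h x = u x ^ ((2:ℝ)/5) := by
      show h x = (h x ^ ((5:ℝ)/2)) ^ ((2:ℝ)/5)
      rw [← Real.rpow_mul (hnn x hx)]
      norm_num
    have hyh : h y = u y ^ ((2:ℝ)/5) := by
      show h y = (h y ^ ((5:ℝ)/2)) ^ ((2:ℝ)/5)
      rw [← Real.rpow_mul (hnn y hy)]
      norm_num
    have hunx : 0 ≤ u x := Real.rpow_nonneg (hnn x hx) _
    have huny : 0 ≤ u y := Real.rpow_nonneg (hnn y hy) _
    have step1 : |h x - h y| ≤ |u x - u y| ^ ((2:ℝ)/5) := by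
      rw [hxh, hyh]
      exact abs_rpow_sub_rpow_le (u x) (u y) hunx huny (by norm_num) (by norm_num)
    have step2 : |u x - u y| ^ ((2:ℝ)/5) ≤
        ((x - y) ^ ((1:ℝ)/2) * (∫ z in Ioc y x, g z ^ 2) ^ ((1:ℝ)/2)) ^ ((2:ℝ)/5) :=
      Real.rpow_le_rpow (abs_nonneg _) habs (by norm_num)
    have hxynn : 0 ≤ x - y := sub_nonneg.mpr hyx
    have step3 : ((x - y) ^ ((1:ℝ)/2) * (∫ z in Ioc y x, g z ^ 2) ^ ((1:ℝ)/2)) ^ ((2:ℝ)/5)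
        = (x - y) ^ ((1:ℝ)/5) * (∫ z in Ioc y x, g z ^ 2) ^ ((1:ℝ)/5) := by
      rw [Real.mul_rpow (Real.rpow_nonneg hxynn _) (Real.rpow_nonneg hIyx_nn _),
        ← Real.rpow_mul hxynn, ← Real.rpow_mul hIyx_nn]
      norm_num
    have step4 : (x - y) ^ ((1:ℝ)/5) * (∫ z in Ioc y x, g z ^ 2) ^ ((1:ℝ)/5)
        ≤ |x - y| ^ ((1:ℝ)/5) * I ^ ((1:ℝ)/5) := by
      rw [abs_of_nonneg hxynn]
      exact mul_le_mul_of_nonneg_left (Real.rpow_le_rpow hIyx_nn hIyx (by norm_num))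
        (Real.rpow_nonneg hxynn _)
    calc |h x - h y| ≤ _ := step1
      _ ≤ _ := step2
      _ = _ := step3
      _ ≤ _ := step4
  intro x hx y hy
  rcases le_total y x with hyx | hxy
  · exact key x hx y hy hyx
  · rw [abs_sub_comm (h x), abs_sub_comm x]
    exact key y hy x hx hxy
end
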